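/- Let E ⊂ ℂ be compact and assume E ∈ 𝒜ℳ(M,m), i.e. ‖P'‖_E ≤ M (deg P)^m ‖P‖_E for all polynomials P, with M > 0, m ≥ 1. Then for every n ≥ 2, v_n(E,1) ≤ M + (m-1) log n, where v_n(E,r) := (1/n) log φ_n(E,r). -/

import Mathlib

open Polynomial Real

/-- Sup norm of a polynomial on a set `E ⊂ ℂ`. -/
noncomputable def supNorm (E : Set ℂ) (P : Polynomial ℂ) : ℝ :=
  sSup {x : ℝ | ∃ z ∈ E, x = ‖P.eval z‖}

/-- `φ_n(E,r) = sup{ |P(z+ζ)| : z ∈ E, |ζ| ≤ r, deg P ≤ n, ‖P‖_E ≤ 1 }`. -/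
noncomputable def phi (E : Set ℂ) (n : ℕ) (r : ℝ) : ℝ :=
  sSup {x : ℝ | ∃ (P : Polynomial ℂ) (z ζ : ℂ), z ∈ E ∧ ‖ζ‖ ≤ r ∧
    P.natDegree ≤ n ∧ supNorm E P ≤ 1 ∧ x = ‖P.eval (z + ζ)‖}

lemma supNorm_set_eq (E : Set ℂ) (P : Polynomial ℂ) :
    {x : ℝ | ∃ z ∈ E, x = ‖P.eval z‖} = (fun z => ‖P.eval z‖) '' E := by
  ext x; simp [Set.mem_image, eq_comm]

lemma supNorm_bdd (E : Set ℂ) (hE : IsCompact E) (P : Polynomial ℂ) :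
    BddAbove {x : ℝ | ∃ z ∈ E, x = ‖P.eval z‖} := by
  rw [supNorm_set_eq]
  exact (hE.image_of_continuousOn ((P.continuous_aeval.norm).continuousOn)).bddAbove

lemma eval_le_supNorm (E : Set ℂ) (hE : IsCompact E) (P : Polynomial ℂ) {z : ℂ} (hz : z ∈ E) :
    ‖P.eval z‖ ≤ supNorm E P :=
  le_csSup (supNorm_bdd E hE P) ⟨z, hz, rfl⟩

lemma supNorm_nonneg' (E : Set ℂ) (hE : IsCompact E) (hEne : E.Nonempty) (P : Polynomial ℂ) :
    0 ≤ supNorm E P := by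
  obtain ⟨z, hz⟩ := hEne
  exact le_trans (norm_nonneg _) (eval_le_supNorm E hE P hz)

lemma hasse_eval_norm (P : Polynomial ℂ) (k : ℕ) (z : ℂ) :
    ‖((Polynomial.hasseDeriv k P).eval z)‖
      = ‖(Polynomial.derivative^[k] P).eval z‖ / (k.factorial : ℝ) := by
  have h : (Polynomial.derivative^[k] P) = k.factorial • (Polynomial.hasseDeriv k P) := by
    rw [← Polynomial.factorial_smul_hasseDeriv]; rfl
  rw [h, Polynomial.eval_smul, nsmul_eq_mul, norm_mul, Complex.norm_natCast]
  field_simp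

lemma iter_deriv_bound (E : Set ℂ) (hE : IsCompact E) (hEne : E.Nonempty)
    (M m : ℝ) (hM : 0 < M) (hm : 1 ≤ m)
    (hAM : ∀ P : Polynomial ℂ, supNorm E (Polynomial.derivative P) ≤
      M * (P.natDegree : ℝ) ^ m * supNorm E P)
    (n : ℕ) (P : Polynomial ℂ) (hdeg : P.natDegree ≤ n) :
    ∀ k : ℕ, supNorm E (Polynomial.derivative^[k] P) ≤ (M * (n:ℝ) ^ m) ^ k * supNorm E P := by
  intro k
  induction k with
  | zero => simp
  | succ k ih =>
    rw [Function.iterate_succ_apply']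
    calc supNorm E (Polynomial.derivative (Polynomial.derivative^[k] P))
        ≤ M * ((Polynomial.derivative^[k] P).natDegree : ℝ) ^ m *
            supNorm E (Polynomial.derivative^[k] P) := hAM _
      _ ≤ M * (n:ℝ) ^ m * ((M * (n:ℝ) ^ m) ^ k * supNorm E P) := by
          apply mul_le_mul
          · apply mul_le_mul_of_nonneg_left _ hM.le
            apply Real.rpow_le_rpow (by positivity) _ (by linarith)
            exact_mod_cast le_trans ((P.natDegree_iterate_derivative k).trans (Nat.sub_le _ _)) hdeg
          · exact ih
          · exact supNorm_nonneg' E hE hEne _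
          · positivity
      _ = (M * (n:ℝ) ^ m) ^ (k+1) * supNorm E P := by ring

lemma small_disk (E : Set ℂ) (hE : IsCompact E) (hEne : E.Nonempty)
    (M m : ℝ) (hM : 0 < M) (hm : 1 ≤ m)
    (hAM : ∀ P : Polynomial ℂ, supNorm E (Polynomial.derivative P) ≤
      M * (P.natDegree : ℝ) ^ m * supNorm E P)
    (n : ℕ) (hn : 2 ≤ n)
    (P : Polynomial ℂ) (hdeg : P.natDegree ≤ n) (hP1 : supNorm E P ≤ 1)
    (z ζ : ℂ) (hz : z ∈ E) (hζ : ‖ζ‖ ≤ ((n:ℝ) ^ (m-1))⁻¹) :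
    ‖P.eval (z + ζ)‖ ≤ Real.exp (M * n) := by
  have hnp : (0:ℝ) < n := by positivity
  set r₀ : ℝ := ((n:ℝ) ^ (m-1))⁻¹ with hr₀
  have hr₀pos : 0 < r₀ := by positivity
  have hiter := iter_deriv_bound E hE hEne M m hM hm hAM n P hdeg
  have h1 : P.eval (z + ζ) = (Polynomial.taylor z P).eval ζ := by
    rw [Polynomial.taylor_eval, add_comm]
  have h2 : (Polynomial.taylor z P).eval ζ =
      ∑ i ∈ Finset.range (n+1), (Polynomial.taylor z P).coeff i * ζ ^ i := by
    apply Polynomial.eval_eq_sum_range'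
    rw [Polynomial.natDegree_taylor]; omega
  rw [h1, h2]
  calc ‖∑ i ∈ Finset.range (n+1), (Polynomial.taylor z P).coeff i * ζ ^ i‖
      ≤ ∑ i ∈ Finset.range (n+1), ‖(Polynomial.taylor z P).coeff i * ζ ^ i‖ :=
        norm_sum_le _ _
    _ ≤ ∑ i ∈ Finset.range (n+1), (M * (n:ℝ)) ^ i / (i.factorial : ℝ) := by
        apply Finset.sum_le_sum
        intro i _
        rw [norm_mul, norm_pow, Polynomial.taylor_coeff, hasse_eval_norm]
        have hb : ‖(Polynomial.derivative^[i] P).eval z‖ ≤ (M * (n:ℝ)^m)^i := by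
          calc ‖(Polynomial.derivative^[i] P).eval z‖
              ≤ supNorm E (Polynomial.derivative^[i] P) := eval_le_supNorm E hE _ hz
            _ ≤ (M * (n:ℝ) ^ m) ^ i * supNorm E P := hiter i
            _ ≤ (M * (n:ℝ) ^ m) ^ i * 1 :=
                mul_le_mul_of_nonneg_left hP1 (by positivity)
            _ = (M * (n:ℝ) ^ m) ^ i := mul_one _
        have hζi : ‖ζ‖ ^ i ≤ r₀ ^ i := pow_le_pow_left₀ (norm_nonneg _) hζ i
        calc ‖(Polynomial.derivative^[i] P).eval z‖ / (i.factorial : ℝ) * ‖ζ‖ ^ i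
            ≤ (M * (n:ℝ)^m)^i / (i.factorial : ℝ) * r₀ ^ i := by
              apply mul_le_mul _ hζi (by positivity) (by positivity)
              exact div_le_div_of_nonneg_right hb (by positivity) |>.trans_eq rfl
          _ = ((M * (n:ℝ)^m) * r₀)^i / (i.factorial : ℝ) := by rw [mul_pow]; ring
          _ = (M * (n:ℝ))^i / (i.factorial : ℝ) := by
              congr 2
              have h : (n:ℝ) ^ (m-1) = (n:ℝ)^m / (n:ℝ) := by
                rw [Real.rpow_sub hnp, Real.rpow_one]
              have h2 : ((n:ℝ) ^ m) ≠ 0 := by positivity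
              rw [hr₀, h]; field_simp
    _ ≤ Real.exp (M * n) := Real.sum_le_exp_of_nonneg (by positivity) _

lemma max_mod_ext (n : ℕ) (r₀ : ℝ) (hr₀ : 0 < r₀) (hr₁ : r₀ ≤ 1)
    (P : Polynomial ℂ) (hdeg : P.natDegree ≤ n) (z : ℂ) (A : ℝ) (hA : 0 ≤ A)
    (hsmall : ∀ w : ℂ, ‖w‖ ≤ r₀ → ‖P.eval (z + w)‖ ≤ A)
    (ζ : ℂ) (hζ : ‖ζ‖ ≤ 1) :
    ‖P.eval (z + ζ)‖ ≤ A * (r₀⁻¹) ^ n := by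
  set f : ℂ → ℂ := fun w => ∑ k ∈ Finset.range (n+1), (Polynomial.taylor z P).coeff k * w^(n-k)
    with hf
  have hdf : Differentiable ℂ f := by
    apply Differentiable.fun_sum
    intro k _
    exact (differentiable_const _).mul (differentiable_pow _)
  have hinv : ∀ w : ℂ, w ≠ 0 → f w = w^n * P.eval (z + w⁻¹) := by
    intro w hw
    have he : P.eval (z + w⁻¹) = (Polynomial.taylor z P).eval w⁻¹ := by
      rw [Polynomial.taylor_eval, add_comm]
    rw [he, Polynomial.eval_eq_sum_range' (n := n+1) (by rw [Polynomial.natDegree_taylor]; omega),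
      Finset.mul_sum, hf]
    apply Finset.sum_congr rfl
    intro k hk
    simp only [Finset.mem_range] at hk
    rw [pow_sub₀ w hw (by omega), inv_pow]
    field_simp
  have hone_le : (1:ℝ) ≤ (r₀⁻¹)^n := by
    apply one_le_pow₀
    rw [le_inv_comm₀ one_pos hr₀]
    simpa using hr₁
  have hmax : ∀ u : ℂ, u ∈ Metric.closedBall (0:ℂ) r₀⁻¹ → ‖f u‖ ≤ A * (r₀⁻¹)^n := by
    intro u hu
    have hrinv : (0:ℝ) < r₀⁻¹ := by positivity
    apply Complex.norm_le_of_forall_mem_frontier_norm_le (U := Metric.ball (0:ℂ) r₀⁻¹)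
      Metric.isBounded_ball hdf.diffContOnCl
    · intro w hw
      rw [frontier_ball _ (ne_of_gt hrinv)] at hw
      have hwn : ‖w‖ = r₀⁻¹ := by simpa using hw
      have hw0 : w ≠ 0 := by
        rintro rfl; rw [norm_zero] at hwn; exact (ne_of_gt hrinv) hwn.symm
      rw [hinv w hw0, norm_mul, norm_pow, hwn]
      rw [mul_comm]
      apply mul_le_mul_of_nonneg_right _ (by positivity)
      apply hsmall
      rw [norm_inv, hwn, inv_inv]
    · rwa [closure_ball _ (ne_of_gt hrinv)]
  by_cases hcase : ‖ζ‖ ≤ r₀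
  · calc ‖P.eval (z + ζ)‖ ≤ A := hsmall ζ hcase
      _ = A * 1 := (mul_one A).symm
      _ ≤ A * (r₀⁻¹)^n := mul_le_mul_of_nonneg_left hone_le hA
  · push_neg at hcase
    have hζ0 : ζ ≠ 0 := by
      intro h; rw [h] at hcase; simp at hcase; linarith
    have hu : ζ⁻¹ ∈ Metric.closedBall (0:ℂ) r₀⁻¹ := by
      simp only [Metric.mem_closedBall, dist_zero_right, norm_inv]
      exact inv_anti₀ hr₀ hcase.le
    have hb := hmax ζ⁻¹ hu
    rw [hinv ζ⁻¹ (inv_ne_zero hζ0), inv_inv, norm_mul, norm_pow, norm_inv] at hb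
    have hζpos : 0 < ‖ζ‖ := norm_pos_iff.mpr hζ0
    have hval : ‖P.eval (z + ζ)‖ = ‖ζ‖^n * ((‖ζ‖⁻¹)^n * ‖P.eval (z + ζ)‖) := by
      rw [← mul_assoc, ← mul_pow, mul_inv_cancel₀ (ne_of_gt hζpos), one_pow, one_mul]
    rw [hval]
    calc ‖ζ‖^n * ((‖ζ‖⁻¹)^n * ‖P.eval (z + ζ)‖) ≤ 1 * (A * (r₀⁻¹)^n) := by
          apply mul_le_mul _ hb (by positivity) (by norm_num)
          exact pow_le_one₀ (norm_nonneg _) hζ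
      _ = A * (r₀⁻¹)^n := one_mul _

/-- if `E ∈ 𝒜ℳ(M,m)`, i.e. `‖P'‖_E ≤ M (deg P)^m ‖P‖_E` for all `P`,
then for every `n ≥ 2`, `v_n(E,1) = (1/n) log φ_n(E,1) ≤ M + (m-1) log n`. -/
theorem stmt8 (E : Set ℂ) (hE : IsCompact E) (hEne : E.Nonempty)
    (M m : ℝ) (hM : 0 < M) (hm : 1 ≤ m)
    (hAM : ∀ P : Polynomial ℂ, supNorm E (Polynomial.derivative P) ≤
      M * (P.natDegree : ℝ) ^ m * supNorm E P)
    (n : ℕ) (hn : 2 ≤ n) :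
    (1 / (n : ℝ)) * Real.log (phi E n 1) ≤ M + (m - 1) * Real.log n := by
  have hnp : (0:ℝ) < n := by positivity
  have hlogn : 0 ≤ Real.log n := Real.log_nonneg (by exact_mod_cast Nat.one_le_of_lt hn)
  have hRHS : 0 ≤ M + (m - 1) * Real.log n := by
    have : 0 ≤ (m - 1) * Real.log n := mul_nonneg (by linarith) hlogn
    linarith
  set r₀ : ℝ := ((n:ℝ) ^ (m-1))⁻¹ with hr₀def
  have hr₀pos : 0 < r₀ := by positivity
  have hr₀le1 : r₀ ≤ 1 := by
    rw [hr₀def]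
    apply inv_le_one_of_one_le₀
    apply Real.one_le_rpow (by exact_mod_cast Nat.one_le_of_lt hn) (by linarith)
  have hr₀inv : r₀⁻¹ = (n:ℝ) ^ (m-1) := by rw [hr₀def, inv_inv]
  set B : ℝ := Real.exp (M * n) * (r₀⁻¹) ^ n with hB
  have hB1 : 1 ≤ B := by
    rw [hB]
    have h1 : (1:ℝ) ≤ Real.exp (M * n) := Real.one_le_exp (by positivity)
    have h2 : (1:ℝ) ≤ (r₀⁻¹)^n := by
      apply one_le_pow₀
      rw [le_inv_comm₀ one_pos hr₀pos]
      simpa using hr₀le1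
    nlinarith
  have hBpos : 0 < B := lt_of_lt_of_le one_pos hB1
  -- every element of the phi set is ≤ B
  have hub : ∀ x ∈ {x : ℝ | ∃ (P : Polynomial ℂ) (z ζ : ℂ), z ∈ E ∧ ‖ζ‖ ≤ (1:ℝ) ∧
      P.natDegree ≤ n ∧ supNorm E P ≤ 1 ∧ x = ‖P.eval (z + ζ)‖}, x ≤ B := by
    rintro x ⟨P, z, ζ, hz, hζ, hdeg, hP1, rfl⟩
    apply max_mod_ext n r₀ hr₀pos hr₀le1 P hdeg z (Real.exp (M * n)) (Real.exp_pos _).le _ ζ hζ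
    intro w hw
    exact small_disk E hE hEne M m hM hm hAM n hn P hdeg hP1 z w hz hw
  have hphile : phi E n 1 ≤ B := Real.sSup_le hub hBpos.le
  have hlogB : Real.log B = M * n + (n:ℝ) * ((m - 1) * Real.log n) := by
    rw [hB, Real.log_mul (Real.exp_ne_zero _) (by positivity), Real.log_exp,
      Real.log_pow, hr₀inv, Real.log_rpow hnp]
  have hphi0 : 0 ≤ phi E n 1 := by
    obtain ⟨z₀, hz₀⟩ := hEne
    have hmem : (0:ℝ) ∈ {x : ℝ | ∃ (P : Polynomial ℂ) (z ζ : ℂ), z ∈ E ∧ ‖ζ‖ ≤ (1:ℝ) ∧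
        P.natDegree ≤ n ∧ supNorm E P ≤ 1 ∧ x = ‖P.eval (z + ζ)‖} := by
      refine ⟨0, z₀, 0, hz₀, by simp, by simp, ?_, by simp⟩
      have hset : {x : ℝ | ∃ z ∈ E, x = ‖(0 : Polynomial ℂ).eval z‖} = {(0:ℝ)} := by
        ext x; simp only [Polynomial.eval_zero, norm_zero, Set.mem_setOf_eq, Set.mem_singleton_iff]
        constructor
        · rintro ⟨z, _, rfl⟩; rfl
        · rintro rfl; exact ⟨z₀, hz₀, rfl⟩
      rw [_root_.supNorm.eq_1, hset, csSup_singleton]; norm_num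
    exact le_csSup ⟨B, hub⟩ hmem
  by_cases hphi : phi E n 1 ≤ 1
  · have hlog : Real.log (phi E n 1) ≤ 0 := Real.log_nonpos hphi0 hphi
    have : (1 / (n:ℝ)) * Real.log (phi E n 1) ≤ 0 :=
      mul_nonpos_of_nonneg_of_nonpos (by positivity) hlog
    linarith
  · push_neg at hphi
    have hlog : Real.log (phi E n 1) ≤ Real.log B :=
      Real.log_le_log (lt_trans one_pos hphi) hphile
    calc (1 / (n:ℝ)) * Real.log (phi E n 1) ≤ (1 / (n:ℝ)) * Real.log B :=
          mul_le_mul_of_nonneg_left hlog (by positivity)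
      _ = M + (m - 1) * Real.log n := by
          rw [hlogB]; field_simp
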